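/- Let g, r, d, e, f be integers with 0 ≤ f < e, r − e + f ≥ 0, f·(r+1−e+f) ≥ e and g − d + r ≥ 0. Set s := r+1−e+f, t := e−f, c := e mod s and α₀ := ⌊e/s⌋ + d − r − f − e. Define the sequence γ'_0, …, γ'_r of r+1 integers by: γ'_0 := 0; γ'_j := e for 1 ≤ j ≤ t−1; γ'_j := d − r − α₀ − 1 for t ≤ j ≤ t+c−1; and γ'_j := d − r − α₀ for t+c ≤ j ≤ r. Then the inequality Σ_{j=0}^{r} max{γ'_j + (g−e) − d + r, 0} ≤ g − e holds if and only if: ρ(g, r, d) ≥ f(r+1−e+f) − (g−d+r) in the case g − d + r < e, and ρ(g, r, d) ≥ f(r+1−e+f) − e in the case g − d + r ≥ e. -/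
import Mathlib


private lemma sum_Ioc_split (F : ℤ → ℤ) {a b c : ℤ} (hab : a ≤ b) (hbc : b ≤ c) :
    ∑ j ∈ Finset.Ioc a c, F j = ∑ j ∈ Finset.Ioc a b, F j + ∑ j ∈ Finset.Ioc b c, F j := by
  rw [← Finset.Ioc_union_Ioc_eq_Ioc hab hbc, Finset.sum_union]
  rw [Finset.disjoint_left]
  intro x hx hy
  simp only [Finset.mem_Ioc] at hx hy
  omega

/-- The Brill–Noether number `ρ(g, r, d) = g - (r+1)(g-d+r)`. -/
def rho (g r d : ℤ) : ℤ := g - (r + 1) * (g - d + r)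

/-- Numerical equivalence from the Remark after (3.7) in Section 3: the
Eisenbud–Harris condition for the ramification sequence `γ'` on the genus
`g - e` component holds if and only if `ρ(g,r,d) ≥ f(r+1-e+f) - (g-d+r)` when
`g-d+r < e`, and `ρ(g,r,d) ≥ f(r+1-e+f) - e` when `g-d+r ≥ e`. -/
theorem eisenbud_harris_condition_gamma' (g r d e f s t c α₀ : ℤ)
    (hf : 0 ≤ f) (hfe : f < e) (href : 0 ≤ r - e + f)
    (hfs : f * (r + 1 - e + f) ≥ e) (hgdr : 0 ≤ g - d + r)
    (hs : s = r + 1 - e + f) (ht : t = e - f) (hc : c = e % s)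
    (hα₀ : α₀ = e / s + d - r - f - e)
    (γ' : ℤ → ℤ)
    (hγ0 : γ' 0 = 0)
    (hγ1 : ∀ j, 1 ≤ j → j ≤ t - 1 → γ' j = e)
    (hγ2 : ∀ j, t ≤ j → j ≤ t + c - 1 → γ' j = d - r - α₀ - 1)
    (hγ3 : ∀ j, t + c ≤ j → j ≤ r → γ' j = d - r - α₀) :
    (∑ j ∈ Finset.Icc (0 : ℤ) r, max (γ' j + (g - e) - d + r) 0 ≤ g - e) ↔
      (if g - d + r < e then rho g r d ≥ f * (r + 1 - e + f) - (g - d + r)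
        else rho g r d ≥ f * (r + 1 - e + f) - e) := by
  obtain ⟨q, hq⟩ : ∃ q, e / s = q := ⟨_, rfl⟩
  rw [hq] at hα₀
  have hs1 : 1 ≤ s := by omega
  have hc0 : 0 ≤ c := by rw [hc]; exact Int.emod_nonneg e (by omega)
  have hcs : c < s := by rw [hc]; exact Int.emod_lt_of_pos e (by omega)
  have hqc : s * q + c = e := by rw [hc, ← hq]; exact Int.mul_ediv_add_emod e s
  have hfs' : f * s ≥ e := by rw [hs]; exact hfs
  have hfq : q ≤ f := by
    by_contra hcon
    push_neg at hcon
    have h2 : f * s ≤ (q - 1) * s := mul_le_mul_of_nonneg_right (by omega) (by omega)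
    nlinarith
  have hfq1 : 1 ≤ c → q + 1 ≤ f := by
    intro hc1
    by_contra hcon
    push_neg at hcon
    have h2 : f * s ≤ q * s := mul_le_mul_of_nonneg_right (by omega) (by omega)
    linarith
  have hr0 : (0:ℤ) ≤ r := by omega
  have h0t1 : (0:ℤ) ≤ t - 1 := by omega
  have ht1r : t - 1 ≤ r := by omega
  have h12 : t - 1 ≤ t + c - 1 := by omega
  have h2r : t + c - 1 ≤ r := by omega
  have hB1 : ∑ j ∈ Finset.Ioc (0:ℤ) (t-1), max (γ' j + (g - e) - d + r) 0
      = (t - 1) * (g - d + r) := by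
    have h1 : ∀ j ∈ Finset.Ioc (0:ℤ) (t-1),
        max (γ' j + (g - e) - d + r) 0 = g - d + r := by
      intro j hj
      simp only [Finset.mem_Ioc] at hj
      rw [hγ1 j (by omega) hj.2]
      have h : e + (g - e) - d + r = g - d + r := by ring
      rw [h]
      exact max_eq_left hgdr
    rw [Finset.sum_congr rfl h1, Finset.sum_const, Int.card_Ioc, nsmul_eq_mul,
      Int.toNat_of_nonneg (by omega)]
    ring
  have hB2 : ∑ j ∈ Finset.Ioc (t-1) (t+c-1), max (γ' j + (g - e) - d + r) 0
      = c * (g - d + r + f - q - 1) := by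
    have h1 : ∀ j ∈ Finset.Ioc (t-1) (t+c-1),
        max (γ' j + (g - e) - d + r) 0 = g - d + r + f - q - 1 := by
      intro j hj
      simp only [Finset.mem_Ioc] at hj
      have hc1 : 1 ≤ c := by omega
      have hff := hfq1 hc1
      rw [hγ2 j (by omega) hj.2, hα₀]
      have h : d - r - (q + d - r - f - e) - 1 + (g - e) - d + r
          = g - d + r + f - q - 1 := by ring
      rw [h]
      exact max_eq_left (by omega)
    rw [Finset.sum_congr rfl h1, Finset.sum_const, Int.card_Ioc, nsmul_eq_mul,
      Int.toNat_of_nonneg (by omega)]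
    ring
  have hB3 : ∑ j ∈ Finset.Ioc (t+c-1) r, max (γ' j + (g - e) - d + r) 0
      = (r - t - c + 1) * (g - d + r + f - q) := by
    have h1 : ∀ j ∈ Finset.Ioc (t+c-1) r,
        max (γ' j + (g - e) - d + r) 0 = g - d + r + f - q := by
      intro j hj
      simp only [Finset.mem_Ioc] at hj
      rw [hγ3 j (by omega) hj.2, hα₀]
      have h : d - r - (q + d - r - f - e) + (g - e) - d + r
          = g - d + r + f - q := by ring
      rw [h]
      exact max_eq_left (by omega)
    rw [Finset.sum_congr rfl h1, Finset.sum_const, Int.card_Ioc, nsmul_eq_mul,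
      Int.toNat_of_nonneg (by omega)]
    ring
  rw [← Finset.Ioc_insert_left hr0, Finset.sum_insert (by simp),
    sum_Ioc_split _ h0t1 ht1r, sum_Ioc_split _ h12 h2r, hγ0, hB1, hB2, hB3]
  have key : (t - 1) * (g - d + r) + (c * (g - d + r + f - q - 1)
      + (r - t - c + 1) * (g - d + r + f - q)) = r * (g - d + r) + s * f - e := by
    linear_combination (q - f) * ht + (q - f) * hs - hqc
  have hsf : s * f = f * (r + 1 - e + f) := by rw [hs]; ring
  unfold rho
  split_ifs with hw
  · rw [max_eq_right (by omega : (0:ℤ) + (g - e) - d + r ≤ 0)]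
    constructor <;> intro h <;> linarith [h, key, hsf]
  · rw [max_eq_left (by omega : (0:ℤ) ≤ 0 + (g - e) - d + r)]
    constructor <;> intro h <;> linarith [h, key, hsf]
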